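/- The monomials A_{i,a}^{-1} (i ∈ I, a ∈ ℂ*) are algebraically independent in the Laurent polynomial ring ℤ[Y_{j,b}^{±}]: if a finite product Π A_{i,a}^{-v_{i,a}} with v_{i,a} ∈ ℤ equals 1, then all v_{i,a} = 0. -/

import Mathlib

noncomputable section

/-- A monomial in the variables `Y_{i,a}` (`i ∈ I`, `a ∈ ℂˣ`), written additively as its
finitely supported exponent function. -/
abbrev GMon (I : Type*) : Type _ := (I × ℂˣ) →₀ ℤ

/-- A monomial `m ≠ 1` is right-negative if for every `a ∈ ℂˣ`, at the maximal `L` such that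
some variable `Y_{j, aq^L}` occurs in `m`, all occurring exponents at shift `L` are negative. -/
def RightNeg {I : Type*} (q : ℂˣ) (m : GMon I) : Prop :=
  m ≠ 0 ∧ ∀ (a : ℂˣ) (L : ℤ), (∃ i, m (i, a * q ^ L) ≠ 0) →
    (∀ (i : I) (l : ℤ), L < l → m (i, a * q ^ l) = 0) → ∀ j, m (j, a * q ^ L) ≤ 0

/-- A monomial is dominant if all its exponents are nonnegative. -/
def Dominant {I : Type*} (m : GMon I) : Prop := ∀ p, 0 ≤ m p

/-- The monomial `A_{i,a}` associated to the Cartan matrix `C` with symmetrizers `r`: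
`A_{i,a} = Y_{i,aq_i⁻¹} Y_{i,aq_i} ∏_{C_{j,i}=-1} Y_{j,a}⁻¹
  ∏_{C_{j,i}=-2} Y_{j,aq⁻¹}⁻¹Y_{j,aq}⁻¹ ∏_{C_{j,i}=-3} Y_{j,aq²}⁻¹Y_{j,a}⁻¹Y_{j,aq⁻²}⁻¹`,
where `q_i = q^{r_i}`. -/
def Amon {I : Type*} [Fintype I] [DecidableEq I] (q : ℂˣ) (C : I → I → ℤ) (r : I → ℤ)
    (i : I) (a : ℂˣ) : GMon I :=
  Finsupp.single (i, a * q ^ (-(r i))) 1 + Finsupp.single (i, a * q ^ (r i)) 1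
  - ∑ j : I, (if C j i = -1 then Finsupp.single (j, a) 1
      else if C j i = -2 then Finsupp.single (j, a * q⁻¹) 1 + Finsupp.single (j, a * q) 1
      else if C j i = -3 then
        Finsupp.single (j, a * q ^ (2:ℤ)) 1 + Finsupp.single (j, a) 1 +
          Finsupp.single (j, a * q ^ (-2:ℤ)) 1
      else 0)

/-- The highest weight monomial `m_{k,a}^{(i)} = ∏_{s=1}^{k} Y_{i, a q_i^{2s-2}}` of a
Kirillov-Reshetikhin module, `q_i = q^{r_i}`. -/
def mki {I : Type*} [DecidableEq I] (q : ℂˣ) (r : I → ℤ) (i : I) (k : ℕ) (a : ℂˣ) : GMon I :=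
  ∑ s ∈ Finset.range k, Finsupp.single (i, a * q ^ (r i * (2 * (s : ℤ)))) 1

/-- The weight `ω(m) = Σ u_{i,a}(m) Λ_i` of a monomial, written in coordinates with respect
to the fundamental weights `Λ_i`. -/
def wt {I : Type*} [DecidableEq I] (m : GMon I) (i : I) : ℤ :=
  m.sum fun p v => if p.1 = i then v else 0

open LaurentPolynomial

/-- augmentation map `T ↦ 1`. -/
def augLP : LaurentPolynomial ℤ →+* ℤ := ((AddMonoidAlgebra.lift ℤ ℤ ℤ) 1).toRingHom

lemma augLP_T (n : ℤ) : augLP (T n) = 1 := by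
  have hT : (T n : LaurentPolynomial ℤ) = AddMonoidAlgebra.single n 1 := rfl
  rw [augLP]
  simp only [AlgHom.toRingHom_eq_coe, RingHom.coe_coe, hT]
  rw [AddMonoidAlgebra.lift_single]
  simp

def Pmat {I : Type*} [DecidableEq I] (C : I → I → ℤ) (r : I → ℤ) :
    Matrix I I (LaurentPolynomial ℤ) :=
  Matrix.of fun j i => if j = i then T (r i) + T (-r i) else
    if C j i = -1 then -1
    else if C j i = -2 then -(T (-1) + T 1)
    else if C j i = -3 then -(T 2 + 1 + T (-2))
    else 0

def Phi {I : Type*} [DecidableEq I] (e : ℂˣ → ℤ) (j : I) : GMon I →+ LaurentPolynomial ℤ :=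
  Finsupp.liftAddHom fun p => if p.1 = j then zmultiplesHom _ (T (e p.2)) else 0

lemma Phi_single {I : Type*} [DecidableEq I] (e : ℂˣ → ℤ) (j : I) (p : I × ℂˣ) (c : ℤ) :
    Phi e j (Finsupp.single p c) = if p.1 = j then c • T (e p.2) else 0 := by
  rw [Phi, Finsupp.liftAddHom_apply_single]
  split_ifs <;> simp

lemma Phi_apply {I : Type*} [DecidableEq I] (e : ℂˣ → ℤ) (j : I) (m : GMon I) :
    Phi e j m = m.sum fun p c => if p.1 = j then c • T (e p.2) else 0 := by
  rw [Phi, Finsupp.liftAddHom_apply]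
  refine Finsupp.sum_congr fun p _ => ?_
  split_ifs <;> simp

lemma Amon_apply_eq_zero {I : Type*} [Fintype I] [DecidableEq I] (q : ℂˣ) (C : I → I → ℤ)
    (r : I → ℤ) (i : I) (a : ℂˣ) (j : I) (b : ℂˣ) (hb : ∀ k : ℤ, a * q ^ k ≠ b) :
    Amon q C r i a (j, b) = 0 := by
  classical
  have h0 : a ≠ b := by simpa using hb 0
  have h1 : a * q ≠ b := by have := hb 1; rwa [zpow_one] at this
  have hm1 : a * q⁻¹ ≠ b := by have := hb (-1); rwa [zpow_neg, zpow_one] at this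
  have hR : a * q ^ (r i) ≠ b := hb _
  have hmr : a * q ^ (-(r i)) ≠ b := hb _
  have hmr' : a * (q ^ (r i))⁻¹ ≠ b := by rwa [← zpow_neg]
  have h2 : a * q ^ (2:ℤ) ≠ b := hb _
  have hm2 : a * q ^ (-2:ℤ) ≠ b := hb _
  have hm2' : a * (q ^ (2:ℤ))⁻¹ ≠ b := by rwa [← zpow_neg]
  have h2n : a * q ^ (2:ℕ) ≠ b := by
    have := h2; rwa [show (2:ℤ) = ((2:ℕ):ℤ) from rfl, zpow_natCast] at this
  have hm2n : a * (q ^ (2:ℕ))⁻¹ ≠ b := by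
    have := hm2'; rwa [show (2:ℤ) = ((2:ℕ):ℤ) from rfl, zpow_natCast] at this
  simp [Amon, Finsupp.sub_apply, Finsupp.add_apply, Finset.sum_apply',
    Finsupp.single_apply, Prod.ext_iff, apply_ite (fun m : GMon I => m (j, b)),
    h0, h1, hm1, hR, hmr, hmr', h2, hm2, hm2', h2n, hm2n]

lemma Phi_Amon {I : Type*} [Fintype I] [DecidableEq I] (q : ℂˣ) (C : I → I → ℤ) (r : I → ℤ)
    (hdiag : ∀ i, C i i = 2) (e : ℂˣ → ℤ) (i : I) (a : ℂˣ)
    (hea : ∀ k : ℤ, e (a * q ^ k) = e a + k) (j : I) :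
    Phi e j (Amon q C r i a) = T (e a) * Pmat C r j i := by
  classical
  have h1 : a * q = a * q ^ (1:ℤ) := by rw [zpow_one]
  have hm1 : a * q⁻¹ = a * q ^ (-1:ℤ) := by rw [zpow_neg, zpow_one]
  have heaR : e (a * q ^ (r i)) = e a + r i := hea _
  have heamR : e (a * q ^ (-(r i))) = e a + (-(r i)) := hea _
  have hea1 : e (a * q) = e a + 1 := by rw [h1]; exact hea _
  have heam1 : e (a * q⁻¹) = e a + (-1) := by rw [hm1]; exact hea _
  have hea2 : e (a * q ^ (2:ℤ)) = e a + 2 := hea _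
  have heam2 : e (a * q ^ (-2:ℤ)) = e a + (-2) := hea _
  rw [Amon, map_sub, map_add, map_sum, Phi_single, Phi_single]
  have key : ∀ k : I, Phi e j
      (if C k i = -1 then Finsupp.single (k, a) 1
      else if C k i = -2 then
        Finsupp.single (k, a * q⁻¹) 1 + Finsupp.single (k, a * q) 1
      else if C k i = -3 then
        Finsupp.single (k, a * q ^ (2:ℤ)) 1 + Finsupp.single (k, a) 1 +
          Finsupp.single (k, a * q ^ (-2:ℤ)) 1
      else 0) = if k = j then
        (if C k i = -1 then T (e a)
        else if C k i = -2 then T (e (a * q⁻¹)) + T (e (a * q))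
        else if C k i = -3 then T (e (a * q ^ (2:ℤ))) + T (e a) + T (e (a * q ^ (-2:ℤ)))
        else 0) else 0 := by
    intro k
    by_cases hkj : k = j
    · subst hkj
      rw [if_pos rfl]
      split_ifs <;> simp [map_add, Phi_single]
    · rw [if_neg hkj]
      split_ifs <;> simp [map_add, Phi_single, hkj]
  simp only [key]
  rw [Finset.sum_ite_eq' Finset.univ j, if_pos (Finset.mem_univ j)]
  by_cases hij : i = j
  · subst hij
    have hP : Pmat C r i i = T (r i) + T (-r i) := by rw [Pmat]; simp
    rw [if_pos rfl, if_pos rfl, hdiag i,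
      if_neg (by norm_num), if_neg (by norm_num), if_neg (by norm_num), sub_zero,
      one_smul, one_smul, heamR, heaR, T_add, T_add, hP]
    ring
  · rw [if_neg hij, if_neg hij, Pmat]
    simp only [Matrix.of_apply, if_neg (fun hji : j = i => hij hji.symm)]
    by_cases hc1 : C j i = -1
    · rw [if_pos hc1, if_pos hc1, zero_add, zero_sub]; ring
    · by_cases hc2 : C j i = -2
      · rw [if_neg hc1, if_pos hc2, if_neg hc1, if_pos hc2, heam1, hea1, T_add, T_add,
          zero_add, zero_sub]
        ring
      · by_cases hc3 : C j i = -3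
        · rw [if_neg hc1, if_neg hc2, if_pos hc3, if_neg hc1, if_neg hc2, if_pos hc3,
            hea2, heam2, T_add, T_add, zero_add, zero_sub]
          ring
        · rw [if_neg hc1, if_neg hc2, if_neg hc3, if_neg hc1, if_neg hc2, if_neg hc3]
          simp


/-- the monomials `A_{i,a}⁻¹` are algebraically independent: if a finite
product `∏ A_{i,a}^{v_{i,a}}` (with integer exponents) equals `1`, all exponents vanish. -/
theorem A_algebraically_independent
    {I : Type*} [Fintype I] [DecidableEq I] (q : ℂˣ) (hq : ∀ n : ℤ, n ≠ 0 → q ^ n ≠ 1)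
    (C : I → I → ℤ) (r : I → ℤ)
    (hdiag : ∀ i, C i i = 2) (hoff : ∀ i j, i ≠ j → -3 ≤ C i j ∧ C i j ≤ 0)
    (hzero : ∀ i j, C i j = 0 ↔ C j i = 0)
    (hfin : ∀ i j, i ≠ j → C i j * C j i ≤ 3)
    (hr1 : ∀ i, 1 ≤ r i) (hr3 : ∀ i, r i ≤ 3)
    (hsym : ∀ i j, r i * C i j = r j * C j i)
    (hpos : ∀ x : I → ℚ, x ≠ 0 → 0 < ∑ i, ∑ j, x i * ((r i * C i j : ℤ) : ℚ) * x j)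
    (v : (I × ℂˣ) →₀ ℤ)
    (h : (v.sum fun p c => c • Amon q C r p.1 p.2) = 0) :
    v = 0 := by
  classical
  -- injectivity of integer powers of q
  have qinj : ∀ m n : ℤ, q ^ m = q ^ n → m = n := by
    intro m n hmn
    by_contra hne
    exact hq (m - n) (sub_ne_zero.mpr hne) (by rw [zpow_sub, hmn]; simp)
  ext p0
  obtain ⟨i0, a0⟩ := p0
  rw [Finsupp.coe_zero, Pi.zero_apply]
  by_contra hv0
  -- the orbit of a0
  set O : ℂˣ → Prop := fun b => ∃ n : ℤ, b = a0 * q ^ n with hOdef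
  have hOa0 : O a0 := ⟨0, by simp⟩
  have hOmul : ∀ b, O b → ∀ k : ℤ, O (b * q ^ k) := by
    rintro b ⟨n, rfl⟩ k
    exact ⟨n + k, by rw [zpow_add, mul_assoc]⟩
  have hOmul' : ∀ (b : ℂˣ) (k : ℤ), O (b * q ^ k) → O b := by
    rintro b k ⟨n, hn⟩
    refine ⟨n - k, ?_⟩
    have hb : b = a0 * q ^ n * (q ^ k)⁻¹ := by rw [← hn, mul_inv_cancel_right]
    rw [hb, zpow_sub]
    first
      | exact (mul_assoc _ _ _)
      | rw [div_eq_mul_inv]; exact (mul_assoc _ _ _)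
  -- exponent function on the orbit
  set e : ℂˣ → ℤ := fun b => if hb : O b then hb.choose else 0 with hedef
  have he : ∀ b, O b → b = a0 * q ^ (e b) := by
    intro b hb
    rw [hedef]
    simp only [dif_pos hb]
    exact hb.choose_spec
  have hea : ∀ b, O b → ∀ k : ℤ, e (b * q ^ k) = e b + k := by
    intro b hb k
    have h1 := he _ (hOmul b hb k)
    have h2 : b * q ^ k = a0 * q ^ (e b + k) := by
      rw [zpow_add, ← mul_assoc, ← he b hb]
    rw [h1] at h2
    exact qinj _ _ (mul_left_cancel h2)
  have einj : ∀ b b', O b → O b' → e b = e b' → b = b' := by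
    intro b b' hb hb' hee
    rw [he b hb, he b' hb', hee]
  -- restrict v to the orbit
  set v' : GMon I := v.filter (fun p => O p.2) with hv'def
  have hv'supp : ∀ p ∈ v'.support, O p.2 := by
    intro p hp
    have hp' := Finsupp.mem_support_iff.mp hp
    rw [hv'def, Finsupp.filter_apply] at hp'
    by_contra hO
    simp [hO] at hp'
  have hv'sub : v'.support ⊆ v.support := by
    rw [hv'def, Finsupp.support_filter]
    exact Finset.filter_subset _ _
  have hv'eq : ∀ p ∈ v'.support, v' p = v p := by
    intro p hp
    rw [hv'def, Finsupp.filter_apply, if_pos (hv'supp p hp)]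
  -- the restricted sum also vanishes
  have hsum0 : (v'.sum fun p c => c • Amon q C r p.1 p.2) = 0 := by
    ext pb
    obtain ⟨j, b⟩ := pb
    rw [Finsupp.coe_zero, Pi.zero_apply, Finsupp.sum_apply]
    rw [Finsupp.sum]
    by_cases hOb : O b
    · have hfull : (v.sum fun p c => c • Amon q C r p.1 p.2) (j, b) = 0 := by rw [h]; rfl
      rw [Finsupp.sum_apply, Finsupp.sum] at hfull
      rw [← hfull]
      have hstep : ∑ p ∈ v'.support, (v' p • Amon q C r p.1 p.2) (j, b)
          = ∑ p ∈ v'.support, (v p • Amon q C r p.1 p.2) (j, b) :=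
        Finset.sum_congr rfl (fun p hp => by rw [hv'eq p hp])
      rw [hstep]
      apply Finset.sum_subset hv'sub
      · intro p hp hp'
        have hnO : ¬ O p.2 := by
          intro hO'
          exact hp' (Finsupp.mem_support_iff.mpr (by
            rw [hv'def, Finsupp.filter_apply, if_pos hO']
            exact Finsupp.mem_support_iff.mp hp))
        have hz : Amon q C r p.1 p.2 (j, b) = 0 := by
          apply Amon_apply_eq_zero
          intro k hk
          exact hnO (hOmul' p.2 k (hk ▸ hOb))
        rw [Finsupp.smul_apply, hz, smul_zero]
    · apply Finset.sum_eq_zero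
      intro p hp
      have hz : Amon q C r p.1 p.2 (j, b) = 0 := by
        apply Amon_apply_eq_zero
        intro k hk
        exact hOb (hk ▸ hOmul p.2 (hv'supp p hp) k)
      rw [Finsupp.smul_apply, hz, smul_zero]
  -- the Laurent-polynomial vector
  set w : I → LaurentPolynomial ℤ := fun i => Phi e i v' with hwdef
  have hrow : ∀ j, (v'.sum fun p c => c • (T (e p.2) * Pmat C r j p.1)) = 0 := by
    intro j
    have h1 : Phi e j (v'.sum fun p c => c • Amon q C r p.1 p.2) = 0 := by
      rw [hsum0]; exact map_zero _
    rw [map_finsuppSum] at h1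
    rw [← h1]
    apply Finsupp.sum_congr
    intro p hp
    rw [map_zsmul, Phi_Amon q C r hdiag e p.1 p.2 (fun k => hea p.2 (hv'supp p hp) k) j]
  have hmv : (Pmat C r).mulVec w = 0 := by
    funext j
    rw [Pi.zero_apply, ← hrow j, Matrix.mulVec, dotProduct]
    have hPw : ∀ i, Pmat C r j i * w i
        = v'.sum fun p c => if p.1 = i then Pmat C r j i * (c • T (e p.2)) else 0 := by
      intro i
      rw [hwdef]
      simp only [Phi_apply]
      rw [Finsupp.mul_sum]
      apply Finsupp.sum_congr
      intro p _
      split_ifs <;> simp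
    simp only [hPw, Finsupp.sum]
    rw [Finset.sum_comm]
    apply Finset.sum_congr rfl
    intro p _
    rw [Finset.sum_ite_eq Finset.univ p.1
      (fun i => Pmat C r j i * (v' p • T (e p.2))), if_pos (Finset.mem_univ _)]
    rw [mul_smul_comm, mul_comm (Pmat C r j p.1)]
  -- the determinant of Pmat is nonzero
  have hQ : augLP.mapMatrix (Pmat C r) = Matrix.of (fun j i => C j i) := by
    ext j i
    rw [RingHom.mapMatrix_apply, Matrix.map_apply, Pmat]
    by_cases hji : j = i
    · subst hji
      simp only [Matrix.of_apply, eq_self_iff_true, if_true]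
      rw [map_add, augLP_T, augLP_T, hdiag]
      norm_num
    · have hb := hoff j i hji
      simp only [Matrix.of_apply, if_neg hji]
      split_ifs with h1 h2 h3 <;>
        simp only [map_neg, map_add, map_one, augLP_T, map_zero] <;> omega
  have hdetQ : (Matrix.of fun j i => C j i : Matrix I I ℤ).det ≠ 0 := by
    intro hdet
    obtain ⟨x, hx0, hxv⟩ := Matrix.exists_mulVec_eq_zero_iff.mpr hdet
    have hxq : (fun i => (x i : ℚ)) ≠ 0 := by
      intro hz
      apply hx0
      funext i
      have := congrFun hz i
      simpa using this
    have hzero' : ∀ i, ∑ j, (C i j : ℚ) * (x j : ℚ) = 0 := by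
      intro i
      have h1 := congrFun hxv i
      rw [Matrix.mulVec, dotProduct, Pi.zero_apply] at h1
      have h2 := congrArg (fun z : ℤ => (z : ℚ)) h1
      push_cast at h2
      simpa using h2
    have hcalc : ∑ i, ∑ j, (x i : ℚ) * ((r i * C i j : ℤ) : ℚ) * (x j : ℚ) = 0 := by
      apply Finset.sum_eq_zero
      intro i _
      have hre : ∑ j, (x i : ℚ) * ((r i * C i j : ℤ) : ℚ) * (x j : ℚ)
          = ((x i : ℚ) * (r i : ℚ)) * ∑ j, (C i j : ℚ) * (x j : ℚ) := by
        rw [Finset.mul_sum]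
        apply Finset.sum_congr rfl
        intro j _
        push_cast
        ring
      rw [hre, hzero' i, mul_zero]
    have := hpos (fun i => (x i : ℚ)) hxq
    rw [hcalc] at this
    exact lt_irrefl 0 this
  have hdetP : (Pmat C r).det ≠ 0 := by
    intro h0
    exact hdetQ (by rw [← hQ, ← RingHom.map_det, h0, map_zero])
  -- conclude w = 0
  have hw0 : ∀ i, w i = 0 := by
    intro i
    have h2 : (Pmat C r).adjugate.mulVec ((Pmat C r).mulVec w) = 0 := by
      rw [hmv, Matrix.mulVec_zero]
    rw [Matrix.mulVec_mulVec, Matrix.adjugate_mul, Matrix.smul_mulVec,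
      Matrix.one_mulVec] at h2
    have h3 : (Pmat C r).det * w i = 0 := by
      have h4 := congrFun h2 i
      simpa [smul_eq_mul] using h4
    rcases mul_eq_zero.mp h3 with h5 | h5
    · exact absurd h5 hdetP
    · exact h5
  -- extract the coefficient of T (e a0) in w i0
  have hvv' : v' (i0, a0) = v (i0, a0) := by
    rw [hv'def, Finsupp.filter_apply, if_pos hOa0]
  have hps : (i0, a0) ∈ v'.support :=
    Finsupp.mem_support_iff.mpr (by rw [hvv']; exact hv0)
  apply hv0
  rw [← hvv']
  -- coefficient map
  have hcoefT : ∀ (m n : ℤ), ((Finsupp.applyAddHom n).comp (AddMonoidAlgebra.coeffAddEquiv (R := ℤ) (M := ℤ)).toAddMonoidHom : LaurentPolynomial ℤ →+ ℤ) (T m) = if m = n then 1 else 0 := by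
    intro m n
    show (Finsupp.single m 1 : ℤ →₀ ℤ) n = _
    rw [Finsupp.single_apply]
  have h6 : ((Finsupp.applyAddHom (e a0)).comp (AddMonoidAlgebra.coeffAddEquiv (R := ℤ) (M := ℤ)).toAddMonoidHom : LaurentPolynomial ℤ →+ ℤ) (w i0) = 0 := by
    rw [hw0 i0, map_zero]
  rw [hwdef] at h6
  simp only [Phi_apply] at h6
  rw [map_finsuppSum] at h6
  rw [Finsupp.sum] at h6
  rw [Finset.sum_eq_single_of_mem (i0, a0) hps] at h6
  · rw [if_pos rfl, map_zsmul, hcoefT, if_pos rfl] at h6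
    simpa using h6
  · intro p hp hpne
    rcases eq_or_ne p.1 i0 with h7 | h7
    · rcases eq_or_ne (e p.2) (e a0) with h8 | h8
      · exact absurd (Prod.ext h7 (einj p.2 a0 (hv'supp p hp) hOa0 h8)) hpne
      · rw [if_pos h7, map_zsmul, hcoefT, if_neg h8]
        simp
    · rw [if_neg h7, map_zero]
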